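/- Let A be an additive category and t an additive equivalence. A cochain complex X (with X_{n+3} ≅ tX_n compatibly, i.e. a candidate triangle) is contractible if and only if the associated 'class of identities' vanishes; concretely: if there exist morphisms k_i : tX_i → X_{i+2} with d_{i+3}∘k_i − k_{i+1}∘(t d_{i+1}) = (−1)^i α_i and α_{i+2}∘(t k_i)∘(t α_i^{−1}) = −k_{i+3} for all i, then X is a contractible complex. -/
import Mathlib


open CategoryTheory

/-- Let `A` be an additive category and `t` an additive (auto)equivalence. A
candidate triangle, i.e. a cochain complex `X` (here `d i j : X i ⟶ X j` for
`j = i + 1`) together with a compatible degree-3 isomorphism `α : tX ≅ X`, is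
contractible as soon as its "class of identities" vanishes; concretely: if there
exist morphisms `k i : t(X i) ⟶ X (i+2)` with
`d_{i+3} ∘ k_i − k_{i+1} ∘ (t d_{i+1}) = (−1)^i α_i` and
`α_{i+2} ∘ (t k_i) ∘ (t α_i⁻¹) = − k_{i+3}` for all `i`, then `X` admits a chain
contraction `h` with `1 = h d + d h`. -/
theorem stmt3 {A : Type*} [Category A] [Preadditive A]
    (t : A ⥤ A) [t.Additive] [t.IsEquivalence]
    (X : ℤ → A) (d : ∀ i j : ℤ, i + 1 = j → (X i ⟶ X j))
    (hd : ∀ i : ℤ, d i (i+1) rfl ≫ d (i+1) (i+1+1) rfl = 0)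
    (α : ∀ i j : ℤ, i + 3 = j → (t.obj (X i) ≅ X j))
    (hnat : ∀ i : ℤ, t.map (d i (i+1) rfl) ≫ (α (i+1) (i+4) (by omega)).hom =
      (α i (i+3) rfl).hom ≫ d (i+3) (i+4) (by omega))
    (k : ∀ i j : ℤ, i + 2 = j → (t.obj (X i) ⟶ X j))
    (hk1 : ∀ i : ℤ, k i (i+2) rfl ≫ d (i+2) (i+3) (by omega) -
        t.map (d i (i+1) rfl) ≫ k (i+1) (i+3) (by omega) =
        ((Int.negOnePow i : ℤˣ) : ℤ) • (α i (i+3) rfl).hom)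
    (hk2 : ∀ i : ℤ, t.map ((α i (i+3) rfl).inv) ≫ t.map (k i (i+2) rfl) ≫
        (α (i+2) (i+5) (by omega)).hom = -(k (i+3) (i+5) (by omega))) :
    ∃ h : ∀ i j : ℤ, j + 1 = i → (X i ⟶ X j),
      ∀ n : ℤ, 𝟙 (X n) = d n (n+1) rfl ≫ h (n+1) n rfl +
        h n (n-1) (by omega) ≫ d (n-1) n (by omega) := by
  
  have hk1' : ∀ i i1 i2 i3 : ℤ, ∀ (h1 : i + 1 = i1) (h2 : i + 2 = i2) (h3 : i + 3 = i3),
      k i i2 h2 ≫ d i2 i3 (by omega) - t.map (d i i1 h1) ≫ k i1 i3 (by omega) =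
        ((Int.negOnePow i : ℤˣ) : ℤ) • (α i i3 h3).hom := by
    intro i i1 i2 i3 h1 h2 h3
    subst h1; subst h2; subst h3
    exact hk1 i
  have hnat' : ∀ i i1 i3 i4 : ℤ, ∀ (h1 : i + 1 = i1) (h3 : i + 3 = i3) (h4 : i + 4 = i4),
      t.map (d i i1 h1) ≫ (α i1 i4 (by omega)).hom = (α i i3 h3).hom ≫ d i3 i4 (by omega) := by
    intro i i1 i3 i4 h1 h3 h4
    subst h1; subst h3; subst h4
    exact hnat i
  refine ⟨fun i j hij => ((Int.negOnePow (i+1) : ℤˣ) : ℤ) •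
      ((α (j-2) i (by omega)).inv ≫ k (j-2) j (by omega)), ?_⟩
  intro n
  have e1 := hk1' (n-1-2) (n-2) (n-1) n (by omega) (by omega) (by omega)
  have e2 := hnat' (n-1-2) (n-2) n (n+1) (by omega) (by omega) (by omega)
  have e3 : (α (n-1-2) n (by omega)).inv ≫ t.map (d (n-1-2) (n-2) (by omega)) =
      d n (n+1) rfl ≫ (α (n-2) (n+1) (by omega)).inv := by
    rw [Iso.inv_comp_eq, ← Category.assoc, ← e2, Category.assoc, Iso.hom_inv_id,
      Category.comp_id]
  have e1' : k (n-1-2) (n-1) (by omega) ≫ d (n-1) n (by omega) =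
      ((Int.negOnePow (n-1-2) : ℤˣ) : ℤ) • (α (n-1-2) n (by omega)).hom +
        t.map (d (n-1-2) (n-2) (by omega)) ≫ k (n-2) n (by omega) :=
    sub_eq_iff_eq_add.mp e1
  have hsc : ((Int.negOnePow (n+1) : ℤˣ) : ℤ) * ((Int.negOnePow (n-1-2) : ℤˣ) : ℤ) = 1 := by
    rw [← Units.val_mul, ← Int.negOnePow_add]
    rw [show n + 1 + (n - 1 - 2) = 2 * (n - 1) by ring,
      Int.negOnePow_even _ ⟨n - 1, by ring⟩, Units.val_one]
  have hsb : ((Int.negOnePow (n+1+1) : ℤˣ) : ℤ) = -((Int.negOnePow (n+1) : ℤˣ) : ℤ) := by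
    simp [Int.negOnePow_succ]
  simp only [Linear.comp_smul, Linear.smul_comp, Category.assoc, e1',
    Preadditive.comp_add, Preadditive.add_comp, smul_add, smul_smul, hsc, hsb,
    Iso.inv_hom_id, Category.comp_id, one_smul, neg_smul]
  simp only [reassoc_of% e3]
  simp only [Preadditive.comp_neg, Linear.comp_smul, Category.assoc]
  abel
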